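/- With the notation of the context, assume in addition that S₁, S₂, S₃ are self-adjoint. Let C = (C₁,C₂,C₃) : ℝ → ℝ³ be continuous and let t ↦ (θ_t, φ_t) be a continuously differentiable path with θ_t ∈ (0,π) such that n(t) = (sinθ_t cosφ_t, sinθ_t sinφ_t, cosθ_t) solves the Landau–Lifshitz equation ṅ(t) = C(t) × n(t). Then there exists a continuously differentiable function α : ℝ → ℝ with α(0) = 0 such that Ψ(t) = e^{i s α(t)}·T(θ_t,φ_t)ψ₀ satisfies the Schrödinger equation i·Ψ̇(t) = ( C₁(t)S₁ + C₂(t)S₂ + C₃(t)S₃ )·Ψ(t) with Ψ(0) = ψ_{n(0)}. In particular the exact evolution of a spin coherent state under a purely time-dependent field remains, up to a phase, a spin coherent state propagated along the Landau–Lifshitz flow. -/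

import Mathlib

open Complex NormedSpace


section auxlemmas
variable {H : Type*} [NormedAddCommGroup H] [NormedSpace ℂ H] [CompleteSpace H]

private lemma exp_apply_eigen' (A : H →L[ℂ] H) (c : ℂ) (x : H) (h : A x = c • x) :
    NormedSpace.exp A x = Complex.exp c • x := by
  have hpow : ∀ n : ℕ, (A ^ n) x = c ^ n • x := by
    intro n; induction n with
    | zero => simp
    | succ n ih =>
      rw [pow_succ, ContinuousLinearMap.mul_apply, h, map_smul, ih, smul_smul]
      rw [show c * c ^ n = c ^ (n+1) by ring]
  have hs : Summable (fun n : ℕ => ((Nat.factorial n : ℂ))⁻¹ • A ^ n) := expSeries_summable' A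
  have happ : NormedSpace.exp A x = ∑' n : ℕ, (((Nat.factorial n : ℂ))⁻¹ • A ^ n) x := by
    rw [NormedSpace.exp_eq_tsum ℂ]
    exact (ContinuousLinearMap.apply ℂ H x).map_tsum hs
  rw [happ]
  have key : ∀ n : ℕ, (((Nat.factorial n : ℂ))⁻¹ • A ^ n) x
      = (((Nat.factorial n : ℂ))⁻¹ * c ^ n) • x := by
    intro n; rw [ContinuousLinearMap.smul_apply, hpow, smul_smul]
  simp_rw [key]
  rw [Summable.tsum_smul_const]
  · congr 1
    rw [Complex.exp_eq_exp_ℂ, NormedSpace.exp_eq_tsum ℂ]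
    simp [smul_eq_mul]
  · simpa [smul_eq_mul] using expSeries_summable' (𝕂 := ℂ) c

end auxlemmas

section rotlemmas
variable {𝔸 : Type*} [NormedRing 𝔸] [NormedAlgebra ℂ 𝔸] [CompleteSpace 𝔸]

private lemma exp_smul_mul_exp_neg_smul' (A : 𝔸) (z : ℂ) :
    NormedSpace.exp (z • A) * NormedSpace.exp ((-z) • A) = 1 := by
  letI : NormedAlgebra ℚ 𝔸 := NormedAlgebra.restrictScalars ℚ ℂ 𝔸
  rw [← exp_add_of_commute (((Commute.refl A).smul_left z).smul_right (-z))]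
  rw [show z • A + (-z) • A = 0 by module, NormedSpace.exp_zero]

private lemma hasDerivAt_exp_mul_smul (A : 𝔸) (c : ℂ) (u : ℝ) :
    HasDerivAt (fun v : ℝ => NormedSpace.exp ((c * v) • A)) (c • (NormedSpace.exp ((c * u) • A) * A)) u := by
  have hin : HasDerivAt (fun v : ℝ => c * (v : ℂ)) c u := by
    simpa using ((hasDerivAt_id u).ofReal_comp).const_mul c
  have hout : HasDerivAt (fun z : ℂ => NormedSpace.exp (z • A)) (NormedSpace.exp ((c * u) • A) * A) (c * u) :=
    hasDerivAt_exp_smul_const A (c * u)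
  simpa [Function.comp_def] using HasDerivAt.scomp (𝕜 := ℝ) u hout hin

private lemma hasDerivAt_exp_mul_smul' (A : 𝔸) (c : ℂ) (u : ℝ) :
    HasDerivAt (fun v : ℝ => NormedSpace.exp ((c * v) • A)) (c • (A * NormedSpace.exp ((c * u) • A))) u := by
  have hin : HasDerivAt (fun v : ℝ => c * (v : ℂ)) c u := by
    simpa using ((hasDerivAt_id u).ofReal_comp).const_mul c
  have hout : HasDerivAt (fun z : ℂ => NormedSpace.exp (z • A)) (A * NormedSpace.exp ((c * u) • A)) (c * u) :=
    hasDerivAt_exp_smul_const' A (c * u)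
  simpa [Function.comp_def] using HasDerivAt.scomp (𝕜 := ℝ) u hout hin

private lemma rot_conj (A B Bc : 𝔸) (h1 : A * B - B * A = Complex.I • Bc)
    (h2 : A * Bc - Bc * A = -(Complex.I • B)) (t : ℝ) :
    NormedSpace.exp ((-(Complex.I * t)) • A) * B * NormedSpace.exp ((Complex.I * t) • A)
      = (Real.cos t : ℂ) • B + (Real.sin t : ℂ) • Bc := by
  have h1i : Complex.I • (A * B) - Complex.I • (B * A) = -Bc := by
    rw [← smul_sub, h1, smul_smul, Complex.I_mul_I, neg_one_smul]
  have h2i : Complex.I • (A * Bc) - Complex.I • (Bc * A) = B := by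
    rw [← smul_sub, h2, smul_neg, smul_smul, Complex.I_mul_I, neg_one_smul, neg_neg]
  set m : ℝ → 𝔸 := fun u => (Real.cos u : ℂ) • B + (Real.sin u : ℂ) • Bc with hm_def
  set F : ℝ → 𝔸 := fun u =>
    NormedSpace.exp ((Complex.I * u) • A) * m u * NormedSpace.exp ((-Complex.I * u) • A) with hF_def
  have hm : ∀ u : ℝ, HasDerivAt m ((-Real.sin u : ℂ) • B + (Real.cos u : ℂ) • Bc) u := by
    intro u
    have h := (((Real.hasDerivAt_cos u).ofReal_comp).smul_const B).add
      (((Real.hasDerivAt_sin u).ofReal_comp).smul_const Bc)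
    rw [Complex.ofReal_neg] at h
    exact h
  have hF : ∀ u : ℝ, HasDerivAt F 0 u := by
    intro u
    have hd := ((hasDerivAt_exp_mul_smul A Complex.I u).mul (hm u)).mul
      (hasDerivAt_exp_mul_smul' A (-Complex.I) u)
    have hbr : Complex.I • (A * m u) + ((-Real.sin u : ℂ) • B + (Real.cos u : ℂ) • Bc)
        + (-Complex.I) • (m u * A) = 0 := by
      simp only [hm_def, mul_add, add_mul, mul_smul_comm, smul_mul_assoc, smul_add, smul_smul]
      linear_combination (norm := module) (Real.cos u : ℂ) • h1i + (Real.sin u : ℂ) • h2i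
    have hz : (Complex.I • (NormedSpace.exp ((Complex.I * u) • A) * A) * m u +
          NormedSpace.exp ((Complex.I * u) • A) * ((-Real.sin u : ℂ) • B + (Real.cos u : ℂ) • Bc)) *
          NormedSpace.exp ((-Complex.I * u) • A) +
        NormedSpace.exp ((Complex.I * u) • A) * m u *
          ((-Complex.I) • (A * NormedSpace.exp ((-Complex.I * u) • A))) = 0 := by
      have heq : (Complex.I • (NormedSpace.exp ((Complex.I * u) • A) * A) * m u +
          NormedSpace.exp ((Complex.I * u) • A) * ((-Real.sin u : ℂ) • B + (Real.cos u : ℂ) • Bc)) *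
          NormedSpace.exp ((-Complex.I * u) • A) +
        NormedSpace.exp ((Complex.I * u) • A) * m u *
          ((-Complex.I) • (A * NormedSpace.exp ((-Complex.I * u) • A)))
          = NormedSpace.exp ((Complex.I * u) • A) *
            (Complex.I • (A * m u) + ((-Real.sin u : ℂ) • B + (Real.cos u : ℂ) • Bc)
              + (-Complex.I) • (m u * A)) * NormedSpace.exp ((-Complex.I * u) • A) := by
        simp only [mul_add, add_mul, mul_smul_comm, smul_mul_assoc, mul_assoc]
      rw [heq, hbr, mul_zero, zero_mul]
    exact hz ▸ hd
  have hconst : F t = F 0 := by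
    have hdiff : Differentiable ℝ F := fun u => (hF u).differentiableAt
    have hderiv : ∀ u, deriv F u = 0 := fun u => (hF u).deriv
    exact is_const_of_deriv_eq_zero hdiff hderiv t 0
  have hF0 : F 0 = B := by
    simp [hF_def, hm_def, NormedSpace.exp_zero]
  rw [hF0] at hconst
  have hinv1 : NormedSpace.exp ((-(Complex.I * t)) • A) * NormedSpace.exp ((Complex.I * t) • A) = 1 := by
    simpa using exp_smul_mul_exp_neg_smul' A (-(Complex.I * t))
  calc NormedSpace.exp ((-(Complex.I * t)) • A) * B * NormedSpace.exp ((Complex.I * t) • A)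
      = NormedSpace.exp ((-(Complex.I * t)) • A) *
          (NormedSpace.exp ((Complex.I * t) • A) * m t * NormedSpace.exp ((-Complex.I * t) • A)) *
          NormedSpace.exp ((Complex.I * t) • A) := by rw [← hconst]
    _ = (NormedSpace.exp ((-(Complex.I * t)) • A) * NormedSpace.exp ((Complex.I * t) • A)) * m t *
          (NormedSpace.exp ((-(Complex.I * t)) • A) * NormedSpace.exp ((Complex.I * t) • A)) := by
        rw [show (-Complex.I * (t:ℂ)) = -(Complex.I * t) by ring]; simp only [mul_assoc]
    _ = m t := by rw [hinv1]; simp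

private lemma rot_comm (A B Bc : 𝔸) (h1 : A * B - B * A = Complex.I • Bc)
    (h2 : A * Bc - Bc * A = -(Complex.I • B)) (t : ℝ) :
    B * NormedSpace.exp ((-(Complex.I * t)) • A)
      = NormedSpace.exp ((-(Complex.I * t)) • A)
        * ((Real.cos t : ℂ) • B - (Real.sin t : ℂ) • Bc) := by
  have h := rot_conj A B Bc h1 h2 (-t)
  have e1 : (-(Complex.I * ((-t : ℝ) : ℂ))) = Complex.I * t := by push_cast; ring
  have e2 : (Complex.I * ((-t : ℝ) : ℂ)) = -(Complex.I * t) := by push_cast; ring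
  rw [e1, e2] at h
  simp only [Real.cos_neg, Real.sin_neg, Complex.ofReal_neg, neg_smul, ← sub_eq_add_neg] at h
  have hinv : NormedSpace.exp (-((Complex.I * t) • A)) * NormedSpace.exp ((Complex.I * t) • A) = 1 := by
    have h' := exp_smul_mul_exp_neg_smul' A (-(Complex.I * t))
    simpa [neg_smul] using h'
  simp only [neg_smul]
  calc B * NormedSpace.exp (-((Complex.I * t) • A))
      = (NormedSpace.exp (-((Complex.I * t) • A)) * NormedSpace.exp ((Complex.I * t) • A)) *
        (B * NormedSpace.exp (-((Complex.I * t) • A))) := by rw [hinv, one_mul]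
    _ = NormedSpace.exp (-((Complex.I * t) • A)) *
        (NormedSpace.exp ((Complex.I * t) • A) * B * NormedSpace.exp (-((Complex.I * t) • A))) := by
        simp only [mul_assoc]
    _ = _ := by rw [h]

private lemma hasDerivAt_exp_nI_smul (A : 𝔸) (u : ℝ) :
    HasDerivAt (fun v : ℝ => NormedSpace.exp ((-(Complex.I * v)) • A))
      ((-Complex.I) • (NormedSpace.exp ((-(Complex.I * u)) • A) * A)) u := by
  have h := hasDerivAt_exp_mul_smul A (-Complex.I) u
  simp only [neg_mul] at h
  exact h

end rotlemmas

set_option maxHeartbeats 1600000 in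
/-- For a purely time-dependent field `C(t)`, the spin coherent state propagated
along the Landau–Lifshitz flow solves the Schrödinger equation
`iΨ̇ = (C₁S₁ + C₂S₂ + C₃S₃)Ψ` exactly, up to a real phase `s·α(t)`. -/
theorem stmt_17 {H : Type*} [NormedAddCommGroup H] [InnerProductSpace ℂ H] [CompleteSpace H]
    (S₁ S₂ S₃ : H →L[ℂ] H)
    (h12 : S₁ ∘L S₂ - S₂ ∘L S₁ = Complex.I • S₃)
    (h23 : S₂ ∘L S₃ - S₃ ∘L S₂ = Complex.I • S₁)
    (h31 : S₃ ∘L S₁ - S₁ ∘L S₃ = Complex.I • S₂)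
    (hsa1 : IsSelfAdjoint S₁) (hsa2 : IsSelfAdjoint S₂) (hsa3 : IsSelfAdjoint S₃)
    (s : ℝ) (hs : 0 < s)
    (ψ₀ : H) (hψ₀ : ‖ψ₀‖ = 1)
    (hS3ψ₀ : S₃ ψ₀ = -((s : ℂ) • ψ₀))
    (hSmψ₀ : (S₁ - Complex.I • S₂) ψ₀ = 0)
    (C₁ C₂ C₃ : ℝ → ℝ) (hC₁ : Continuous C₁) (hC₂ : Continuous C₂) (hC₃ : Continuous C₃)
    (θ φ : ℝ → ℝ) (hθ : ContDiff ℝ 1 θ) (hφ : ContDiff ℝ 1 φ)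
    (hθrange : ∀ t, θ t ∈ Set.Ioo 0 Real.pi)
    -- the unit vector n(t) = (sinθ cosφ, sinθ sinφ, cosθ) solves ṅ = C × n :
    (hLL1 : ∀ t, HasDerivAt (fun τ => Real.sin (θ τ) * Real.cos (φ τ))
      (C₂ t * Real.cos (θ t) - C₃ t * (Real.sin (θ t) * Real.sin (φ t))) t)
    (hLL2 : ∀ t, HasDerivAt (fun τ => Real.sin (θ τ) * Real.sin (φ τ))
      (C₃ t * (Real.sin (θ t) * Real.cos (φ t)) - C₁ t * Real.cos (θ t)) t)
    (hLL3 : ∀ t, HasDerivAt (fun τ => Real.cos (θ τ))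
      (C₁ t * (Real.sin (θ t) * Real.sin (φ t)) - C₂ t * (Real.sin (θ t) * Real.cos (φ t))) t) :
    let T : ℝ → ℝ → (H →L[ℂ] H) := fun ϑ ϕ =>
      NormedSpace.exp (((ϑ : ℂ) / 2) • (Complex.exp (Complex.I * ϕ) • (S₁ - Complex.I • S₂)
        - Complex.exp (-(Complex.I * ϕ)) • (S₁ + Complex.I • S₂)))
    ∃ α : ℝ → ℝ, ContDiff ℝ 1 α ∧ α 0 = 0 ∧
      (Complex.exp (Complex.I * s * α 0) • (T (θ 0) (φ 0)) ψ₀ = (T (θ 0) (φ 0)) ψ₀) ∧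
      ∀ t, HasDerivAt
        (fun τ => Complex.exp (Complex.I * s * α τ) • (T (θ τ) (φ τ)) ψ₀)
        ((-Complex.I) • (((C₁ t : ℂ) • S₁ + (C₂ t : ℂ) • S₂ + (C₃ t : ℂ) • S₃)
          (Complex.exp (Complex.I * s * α t) • (T (θ t) (φ t)) ψ₀))) t := by
  intro T
  have hTdef : T = fun (ϑ ϕ : ℝ) =>
      NormedSpace.exp (((ϑ : ℂ) / 2) • (Complex.exp (Complex.I * (ϕ : ℂ)) • (S₁ - Complex.I • S₂)
        - Complex.exp (-(Complex.I * (ϕ : ℂ))) • (S₁ + Complex.I • S₂))) := rfl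
  have h12' : S₁ * S₂ - S₂ * S₁ = Complex.I • S₃ := h12
  have h23' : S₂ * S₃ - S₃ * S₂ = Complex.I • S₁ := h23
  have h31' : S₃ * S₁ - S₁ * S₃ = Complex.I • S₂ := h31
  have h32 : S₃ * S₂ - S₂ * S₃ = Complex.I • (-S₁) := by rw [smul_neg, ← h23']; abel
  have h31n : S₃ * (-S₁) - (-S₁) * S₃ = -(Complex.I • S₂) := by
    rw [mul_neg, neg_mul, ← h31']; abel
  have hU2n : S₃ * S₂ - S₂ * S₃ = -(Complex.I • S₁) := by rw [← h23']; abel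
  have h21 : S₂ * S₁ - S₁ * S₂ = Complex.I • (-S₃) := by rw [smul_neg, ← h12']; abel
  have h21n : S₂ * S₁ - S₁ * S₂ = -(Complex.I • S₃) := by rw [← h12']; abel
  have h23n : S₂ * (-S₃) - (-S₃) * S₂ = -(Complex.I • S₁) := by
    rw [mul_neg, neg_mul, ← h23']; abel
  set Uo : ℝ → (H →L[ℂ] H) := fun x => NormedSpace.exp ((-(Complex.I * x)) • S₃) with hUo
  set Vo : ℝ → (H →L[ℂ] H) := fun x => NormedSpace.exp ((-(Complex.I * x)) • S₂) with hVo
  -- commutation rules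
  have cU1 : ∀ x : ℝ, S₁ * Uo x
      = Uo x * ((Real.cos x : ℂ) • S₁ - (Real.sin x : ℂ) • S₂) :=
    fun x => rot_comm S₃ S₁ S₂ h31' hU2n x
  have cU2 : ∀ x : ℝ, S₂ * Uo x
      = Uo x * ((Real.cos x : ℂ) • S₂ + (Real.sin x : ℂ) • S₁) := fun x => by
    rw [hUo]; rw [rot_comm S₃ S₂ (-S₁) h32 h31n x]; congr 1; module
  have cU3 : ∀ x : ℝ, S₃ * Uo x = Uo x * S₃ := fun x =>
    (((Commute.refl S₃).smul_right (-(Complex.I * x))).exp_right).eq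
  have cV3 : ∀ x : ℝ, S₃ * Vo x
      = Vo x * ((Real.cos x : ℂ) • S₃ - (Real.sin x : ℂ) • S₁) :=
    fun x => rot_comm S₂ S₃ S₁ h23' h21n x
  have cV1 : ∀ x : ℝ, S₁ * Vo x
      = Vo x * ((Real.cos x : ℂ) • S₁ + (Real.sin x : ℂ) • S₃) := fun x => by
    rw [hVo]; rw [rot_comm S₂ S₁ (-S₃) h21 h23n x]; congr 1; module
  have cV2 : ∀ x : ℝ, S₂ * Vo x = Vo x * S₂ := fun x =>
    (((Commute.refl S₂).smul_right (-(Complex.I * x))).exp_right).eq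
  have cUconj : ∀ x : ℝ, Uo x * S₂ * NormedSpace.exp ((Complex.I * x) • S₃)
      = (Real.cos x : ℂ) • S₂ - (Real.sin x : ℂ) • S₁ := fun x => by
    rw [hUo]; rw [rot_conj S₃ S₂ (-S₁) h32 h31n x]; module
  -- eigenvector fact
  have heig : ∀ c : ℂ, NormedSpace.exp (c • S₃) ψ₀ = Complex.exp (-(c * s)) • ψ₀ := fun c => by
    apply exp_apply_eigen'
    rw [ContinuousLinearMap.smul_apply, hS3ψ₀]
    module
  -- coherent state in product form
  have hT : ∀ a b : ℝ, T a b ψ₀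
      = Complex.exp (-(Complex.I * s * b)) • (Uo b) ((Vo a) ψ₀) := by
    intro a b
    have hgen : (((a : ℂ)) / 2) • (Complex.exp (Complex.I * b) • (S₁ - Complex.I • S₂)
        - Complex.exp (-(Complex.I * b)) • (S₁ + Complex.I • S₂))
        = Uo b * ((-(Complex.I * a)) • S₂) * NormedSpace.exp ((Complex.I * b) • S₃) := by
      have hc : Uo b * ((-(Complex.I * a)) • S₂) * NormedSpace.exp ((Complex.I * b) • S₃)
          = (-(Complex.I * a)) • (Uo b * S₂ * NormedSpace.exp ((Complex.I * b) • S₃)) := by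
        simp only [mul_smul_comm, smul_mul_assoc]
      rw [hc, cUconj b]
      have hE1 : Complex.exp (Complex.I * b)
          = (Real.cos b : ℂ) + (Real.sin b : ℂ) * Complex.I := by
        rw [mul_comm, Complex.exp_mul_I, ← Complex.ofReal_cos, ← Complex.ofReal_sin]
      have hE2 : Complex.exp (-(Complex.I * b))
          = (Real.cos b : ℂ) - (Real.sin b : ℂ) * Complex.I := by
        rw [show -(Complex.I * (b : ℂ)) = ((-b : ℝ) : ℂ) * Complex.I by push_cast; ring,
          Complex.exp_mul_I, ← Complex.ofReal_cos, ← Complex.ofReal_sin,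
          Real.cos_neg, Real.sin_neg]
        push_cast; ring
      rw [hE1, hE2]
      module
    have hval : Uo b * NormedSpace.exp ((Complex.I * b) • S₃) = 1 := by
      rw [hUo]
      simpa using exp_smul_mul_exp_neg_smul' S₃ (-(Complex.I * b))
    have hinvval : NormedSpace.exp ((Complex.I * b) • S₃) * Uo b = 1 := by
      rw [hUo]
      simpa using exp_smul_mul_exp_neg_smul' S₃ (Complex.I * b)
    letI : NormedAlgebra ℚ (H →L[ℂ] H) := NormedAlgebra.restrictScalars ℚ ℂ (H →L[ℂ] H)
    have hconj := exp_units_conj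
      (Units.mk (Uo b) (NormedSpace.exp ((Complex.I * b) • S₃)) hval hinvval)
      ((-(Complex.I * a)) • S₂)
    simp only [Units.val_mk, Units.inv_mk] at hconj
    have hTab : T a b = Uo b * NormedSpace.exp ((-(Complex.I * a)) • S₂)
        * NormedSpace.exp ((Complex.I * b) • S₃) := by
      rw [hTdef]
      show NormedSpace.exp _ = _
      rw [hgen]
      exact hconj
    rw [hTab, ContinuousLinearMap.mul_apply, ContinuousLinearMap.mul_apply,
      heig (Complex.I * b), map_smul, map_smul]
    rw [show Complex.I * (b : ℂ) * (s : ℂ) = Complex.I * s * b by ring]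
  -- derivatives of θ and φ
  have hθd : ∀ t, HasDerivAt θ (deriv θ t) t :=
    fun t => ((hθ.differentiable one_ne_zero) t).hasDerivAt
  have hφd : ∀ t, HasDerivAt φ (deriv φ t) t :=
    fun t => ((hφ.differentiable one_ne_zero) t).hasDerivAt
  have hθ' : ∀ t, deriv θ t = C₂ t * Real.cos (φ t) - C₁ t * Real.sin (φ t) := by
    intro t
    have e3 := (hLL3 t).unique ((hθd t).cos)
    have hsθ : 0 < Real.sin (θ t) :=
      Real.sin_pos_of_pos_of_lt_pi (hθrange t).1 (hθrange t).2
    apply mul_left_cancel₀ (ne_of_gt hsθ)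
    linear_combination e3
  have hφ' : ∀ t, Real.sin (θ t) * deriv φ t = C₃ t * Real.sin (θ t)
      - Real.cos (θ t) * (C₁ t * Real.cos (φ t) + C₂ t * Real.sin (φ t)) := by
    intro t
    have e1 := (hLL1 t).unique ((hθd t).sin.mul (hφd t).cos)
    have e2 := (hLL2 t).unique ((hθd t).sin.mul (hφd t).sin)
    linear_combination Real.sin (φ t) * e1 - Real.cos (φ t) * e2
      + (C₃ t * Real.sin (θ t) - Real.sin (θ t) * deriv φ t) * Real.sin_sq_add_cos_sq (φ t)
  -- the phase
  set g : ℝ → ℝ := fun r => deriv φ r * (1 - Real.cos (θ r))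
    + (C₁ r * (Real.sin (θ r) * Real.cos (φ r)) + C₂ r * (Real.sin (θ r) * Real.sin (φ r))
      + C₃ r * Real.cos (θ r)) with hgdef
  have hgcont : Continuous g := by
    refine ((hφ.continuous_deriv le_rfl).mul
      (continuous_const.sub (Real.continuous_cos.comp hθ.continuous))).add ?_
    refine ((hC₁.mul ((Real.continuous_sin.comp hθ.continuous).mul
      (Real.continuous_cos.comp hφ.continuous))).add
      (hC₂.mul ((Real.continuous_sin.comp hθ.continuous).mul
      (Real.continuous_sin.comp hφ.continuous)))).add
      (hC₃.mul (Real.continuous_cos.comp hθ.continuous))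
  set α : ℝ → ℝ := fun r => ∫ τ in (0:ℝ)..r, g τ with hαdef
  have hαd : ∀ r, HasDerivAt α (g r) r :=
    fun r => (hgcont.integral_hasStrictDerivAt 0 r).hasDerivAt
  have hα0 : α 0 = 0 := intervalIntegral.integral_same
  refine ⟨α, ?_, hα0, ?_, ?_⟩
  · rw [contDiff_one_iff_deriv]
    refine ⟨fun r => (hαd r).differentiableAt, ?_⟩
    have : deriv α = g := funext fun r => (hαd r).deriv
    rw [this]; exact hgcont
  · rw [hα0]; simp
  · intro t
    -- rewrite the function into factored form
    have hfun : (fun τ => Complex.exp (Complex.I * (s : ℂ) * ((α τ : ℝ) : ℂ))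
          • (T (θ τ) (φ τ)) ψ₀)
        = fun τ => Complex.exp (Complex.I * (s : ℂ) * (((α τ : ℝ) : ℂ) - ((φ τ : ℝ) : ℂ)))
          • (Uo (φ τ)) ((Vo (θ τ)) ψ₀) := by
      funext τ
      rw [hT (θ τ) (φ τ), smul_smul, ← Complex.exp_add]
      congr 2
      ring
    have hval : Complex.exp (Complex.I * (s : ℂ) * ((α t : ℝ) : ℂ)) • (T (θ t) (φ t)) ψ₀
        = Complex.exp (Complex.I * (s : ℂ) * (((α t : ℝ) : ℂ) - ((φ t : ℝ) : ℂ)))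
          • (Uo (φ t)) ((Vo (θ t)) ψ₀) := by
      rw [hT (θ t) (φ t), smul_smul, ← Complex.exp_add]
      congr 2
      ring
    rw [hfun, hval]
    -- derivative of the phase
    have hPd : HasDerivAt
        (fun τ => Complex.exp (Complex.I * (s : ℂ) * (((α τ : ℝ) : ℂ) - ((φ τ : ℝ) : ℂ))))
        (Complex.exp (Complex.I * (s : ℂ) * (((α t : ℝ) : ℂ) - ((φ t : ℝ) : ℂ)))
          * (Complex.I * (s : ℂ) * (((g t : ℝ) : ℂ) - ((deriv φ t : ℝ) : ℂ)))) t := by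
      have hin : HasDerivAt (fun τ : ℝ => Complex.I * (s : ℂ) * (((α τ : ℝ) : ℂ) - ((φ τ : ℝ) : ℂ)))
          (Complex.I * (s : ℂ) * (((g t : ℝ) : ℂ) - ((deriv φ t : ℝ) : ℂ))) t :=
        (((hαd t).ofReal_comp).sub ((hφd t).ofReal_comp)).const_mul (Complex.I * (s : ℂ))
      exact hin.cexp
    -- derivative of the unitary parts
    have hUd : HasDerivAt (fun τ => Uo (φ τ))
        ((deriv φ t) • ((-Complex.I) • (Uo (φ t) * S₃))) t := by
      have h1 := hasDerivAt_exp_nI_smul S₃ (φ t)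
      exact HasDerivAt.scomp (𝕜 := ℝ) t h1 (hφd t)
    have hVd : HasDerivAt (fun τ => Vo (θ τ))
        ((deriv θ t) • ((-Complex.I) • (Vo (θ t) * S₂))) t := by
      have h1 := hasDerivAt_exp_nI_smul S₂ (θ t)
      exact HasDerivAt.scomp (𝕜 := ℝ) t h1 (hθd t)
    have hVdR : HasDerivAt (fun τ => (Vo (θ τ)).restrictScalars ℝ)
        (((deriv θ t) • ((-Complex.I) • (Vo (θ t) * S₂))).restrictScalars ℝ) t :=
      (ContinuousLinearMap.restrictScalarsL ℂ H H ℝ ℝ).hasFDerivAt.comp_hasDerivAt t hVd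
    have hUdR : HasDerivAt (fun τ => (Uo (φ τ)).restrictScalars ℝ)
        (((deriv φ t) • ((-Complex.I) • (Uo (φ t) * S₃))).restrictScalars ℝ) t :=
      (ContinuousLinearMap.restrictScalarsL ℂ H H ℝ ℝ).hasFDerivAt.comp_hasDerivAt t hUd
    have hwd : HasDerivAt (fun τ => (Vo (θ τ)) ψ₀)
        (((deriv θ t) • ((-Complex.I) • (Vo (θ t) * S₂))) ψ₀) t := by
      have h2 := hVdR.clm_apply (hasDerivAt_const t ψ₀)
      rw [map_zero, add_zero] at h2
      exact h2
    have hvd : HasDerivAt (fun τ => (Uo (φ τ)) ((Vo (θ τ)) ψ₀))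
        (((deriv φ t) • ((-Complex.I) • (Uo (φ t) * S₃))) ((Vo (θ t)) ψ₀)
          + (Uo (φ t)) ((((deriv θ t) • ((-Complex.I) • (Vo (θ t) * S₂)))) ψ₀)) t := by
      have h2 := hUdR.clm_apply hwd
      exact h2
    have hfull := hPd.smul hvd
    convert hfull using 1
    · rfl
    -- now a pure vector identity
    set P : ℂ := Complex.exp (Complex.I * (s : ℂ) * (((α t : ℝ) : ℂ) - ((φ t : ℝ) : ℂ))) with hP
    set e : H := S₂ ψ₀ with he
    have hS1ψ : S₁ ψ₀ = Complex.I • e := by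
      have h := hSmψ₀
      rw [ContinuousLinearMap.sub_apply, ContinuousLinearMap.smul_apply, sub_eq_zero] at h
      exact h
    have hS1w : S₁ ((Vo (θ t)) ψ₀) = (Vo (θ t))
        ((Real.cos (θ t) : ℂ) • (Complex.I • e) + (Real.sin (θ t) : ℂ) • (-((s:ℂ) • ψ₀))) := by
      rw [show S₁ ((Vo (θ t)) ψ₀) = (S₁ * Vo (θ t)) ψ₀ from rfl, cV1 (θ t),
        ContinuousLinearMap.mul_apply]
      congr 1
      rw [ContinuousLinearMap.add_apply, ContinuousLinearMap.smul_apply,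
        ContinuousLinearMap.smul_apply, hS1ψ, hS3ψ₀]
    have hS2w : S₂ ((Vo (θ t)) ψ₀) = (Vo (θ t)) e := by
      rw [show S₂ ((Vo (θ t)) ψ₀) = (S₂ * Vo (θ t)) ψ₀ from rfl, cV2 (θ t),
        ContinuousLinearMap.mul_apply]
    have hS3w : S₃ ((Vo (θ t)) ψ₀) = (Vo (θ t))
        ((Real.cos (θ t) : ℂ) • (-((s:ℂ) • ψ₀)) - (Real.sin (θ t) : ℂ) • (Complex.I • e)) := by
      rw [show S₃ ((Vo (θ t)) ψ₀) = (S₃ * Vo (θ t)) ψ₀ from rfl, cV3 (θ t),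
        ContinuousLinearMap.mul_apply]
      congr 1
      rw [ContinuousLinearMap.sub_apply, ContinuousLinearMap.smul_apply,
        ContinuousLinearMap.smul_apply, hS1ψ, hS3ψ₀]
    have hS1v : S₁ ((Uo (φ t)) ((Vo (θ t)) ψ₀)) = (Uo (φ t))
        ((Real.cos (φ t) : ℂ) • (Vo (θ t)) ((Real.cos (θ t) : ℂ) • (Complex.I • e)
            + (Real.sin (θ t) : ℂ) • (-((s:ℂ) • ψ₀)))
          - (Real.sin (φ t) : ℂ) • (Vo (θ t)) e) := by
      rw [show S₁ ((Uo (φ t)) ((Vo (θ t)) ψ₀)) = (S₁ * Uo (φ t)) ((Vo (θ t)) ψ₀) from rfl,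
        cU1 (φ t), ContinuousLinearMap.mul_apply, ContinuousLinearMap.sub_apply,
        ContinuousLinearMap.smul_apply, ContinuousLinearMap.smul_apply, hS1w, hS2w]
    have hS2v : S₂ ((Uo (φ t)) ((Vo (θ t)) ψ₀)) = (Uo (φ t))
        ((Real.cos (φ t) : ℂ) • (Vo (θ t)) e
          + (Real.sin (φ t) : ℂ) • (Vo (θ t)) ((Real.cos (θ t) : ℂ) • (Complex.I • e)
            + (Real.sin (θ t) : ℂ) • (-((s:ℂ) • ψ₀)))) := by
      rw [show S₂ ((Uo (φ t)) ((Vo (θ t)) ψ₀)) = (S₂ * Uo (φ t)) ((Vo (θ t)) ψ₀) from rfl,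
        cU2 (φ t), ContinuousLinearMap.mul_apply, ContinuousLinearMap.add_apply,
        ContinuousLinearMap.smul_apply, ContinuousLinearMap.smul_apply, hS1w, hS2w]
    have hS3v : S₃ ((Uo (φ t)) ((Vo (θ t)) ψ₀)) = (Uo (φ t)) ((Vo (θ t))
        ((Real.cos (θ t) : ℂ) • (-((s:ℂ) • ψ₀)) - (Real.sin (θ t) : ℂ) • (Complex.I • e))) := by
      rw [show S₃ ((Uo (φ t)) ((Vo (θ t)) ψ₀)) = (S₃ * Uo (φ t)) ((Vo (θ t)) ψ₀) from rfl,
        cU3 (φ t), ContinuousLinearMap.mul_apply, hS3w]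
    -- cast facts
    have hθ'c : ((deriv θ t : ℝ) : ℂ)
        = (C₂ t : ℂ) * (Real.cos (φ t) : ℂ) - (C₁ t : ℂ) * (Real.sin (φ t) : ℂ) := by
      have := congrArg (fun r : ℝ => (r : ℂ)) (hθ' t)
      push_cast at this ⊢
      exact this
    have hφ'c : (Real.sin (θ t) : ℂ) * ((deriv φ t : ℝ) : ℂ)
        = (C₃ t : ℂ) * (Real.sin (θ t) : ℂ)
          - (Real.cos (θ t) : ℂ) * ((C₁ t : ℂ) * (Real.cos (φ t) : ℂ)
            + (C₂ t : ℂ) * (Real.sin (φ t) : ℂ)) := by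
      have := congrArg (fun r : ℝ => (r : ℂ)) (hφ' t)
      push_cast at this ⊢
      exact this
    have hgc : ((g t : ℝ) : ℂ) = ((deriv φ t : ℝ) : ℂ) * (1 - (Real.cos (θ t) : ℂ))
        + ((C₁ t : ℂ) * ((Real.sin (θ t) : ℂ) * (Real.cos (φ t) : ℂ))
          + (C₂ t : ℂ) * ((Real.sin (θ t) : ℂ) * (Real.sin (φ t) : ℂ))
          + (C₃ t : ℂ) * (Real.cos (θ t) : ℂ)) := by
      rw [hgdef]
      push_cast
      ring
    -- expand everything and compare coefficients
    simp only [ContinuousLinearMap.add_apply, ContinuousLinearMap.smul_apply,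
      ContinuousLinearMap.mul_apply, map_smul, map_add, map_sub, map_neg,
      hS1v, hS2v, hS3v, hS3w]
    simp only [ContinuousLinearMap.map_smul_of_tower, map_smul, map_add, map_sub, map_neg,
      smul_add, smul_sub, smul_neg, smul_smul, ← he]
    match_scalars
    · simp only [Complex.coe_algebraMap, ← Complex.ofReal_cos, ← Complex.ofReal_sin]
      linear_combination P * hφ'c + (Complex.I * P) * hθ'c
        + (P * ((C₃ t : ℂ) * (Real.sin (θ t) : ℂ)
            - (C₁ t : ℂ) * (Real.cos (φ t) : ℂ) * (Real.cos (θ t) : ℂ)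
            - (C₂ t : ℂ) * (Real.sin (φ t) : ℂ) * (Real.cos (θ t) : ℂ)
            - ((deriv φ t : ℝ) : ℂ) * (Real.sin (θ t) : ℂ))) * Complex.I_sq
    · simp only [Complex.coe_algebraMap, ← Complex.ofReal_cos, ← Complex.ofReal_sin]
      linear_combination (-(Complex.I * P * (s : ℂ))) * hgc
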